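/- Let s ≥ 2 and let γ : ℕ → ℕ be a nondecreasing function such that λ_{s−1}(n) ≤ γ(n)·n for all n ≥ 1. Then for all n ≥ 1: λ_s(n) ≤ γ(n)·λ_s(n, n). -/

import Mathlib

/-- Alternating list `a b a b ⋯` of the given length. -/
def altList : ℕ → ℕ → ℕ → List ℕ
  | 0, _, _ => []
  | (k+1), a, b => a :: altList k b a

/-- An order-`s` Davenport–Schinzel sequence: it contains no (not necessarily
contiguous) subsequence `a b a b ⋯` of length `s+2` over two distinct symbols. -/
def IsDS (s : ℕ) (S : List ℕ) : Prop :=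
  ∀ a b : ℕ, a ≠ b → ¬ (altList (s + 2) a b).Sublist S

/-- 2-sparse: no two equal adjacent symbols. -/
def Sparse2 (S : List ℕ) : Prop := S.Chain' (· ≠ ·)

/-- `S` can be partitioned into at most `m` blocks
(contiguous runs of pairwise distinct symbols). -/
def Blocked (m : ℕ) (S : List ℕ) : Prop :=
  ∃ Bs : List (List ℕ), Bs.length ≤ m ∧ (∀ B ∈ Bs, B.Nodup) ∧ S = Bs.flatten

/-- `λ_s(n)`: maximum length of a 2-sparse order-`s` DS sequence over an
alphabet of `n` symbols. -/
noncomputable def lamS (s n : ℕ) : ℕ :=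
  sSup {l : ℕ | ∃ S : List ℕ, IsDS s S ∧ Sparse2 S ∧ S.toFinset.card ≤ n ∧ S.length = l}

/-- `λ_s(n,m)`: maximum length of an order-`s` DS sequence over an alphabet of
`n` symbols that can be partitioned into at most `m` blocks. -/
noncomputable def lamB (s n m : ℕ) : ℕ :=
  sSup {l : ℕ | ∃ S : List ℕ, IsDS s S ∧ S.toFinset.card ≤ n ∧ Blocked m S ∧ S.length = l}

/- ===================== auxiliary lemmas ===================== -/

lemma altList_cons (k a b : ℕ) : altList (k+1) a b = a :: altList k b a := rfl

lemma altList_succ_append : ∀ (k a b : ℕ),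
    altList (k+1) a b = altList k a b ++ [if k % 2 = 0 then a else b]
  | 0, a, b => by simp [altList]
  | (k+1), a, b => by
    rw [show altList (k+1+1) a b = a :: altList (k+1) b a from rfl,
      altList_succ_append k b a, altList_cons]
    rcases Nat.mod_two_eq_zero_or_one k with h | h <;>
      simp [h, Nat.add_mod]

lemma altList_sublist_altList (a b : ℕ) : ∀ (k j : ℕ),
    (altList k a b).Sublist (altList (k+j) a b)
  | 0, j => by simp [altList]
  | (k+1), j => by
    have : k + 1 + j = (k + j) + 1 := by omega
    rw [this, altList_cons, altList_cons]
    exact (altList_sublist_altList b a k j).cons₂ a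

lemma mem_altList (k a b : ℕ) : a ∈ altList (k+2) a b ∧ b ∈ altList (k+2) a b := by
  rw [show altList (k+2) a b = a :: b :: altList k a b from rfl]
  simp

lemma IsDS.sublist {s : ℕ} {S T : List ℕ} (h : IsDS s S) (hsub : T.Sublist S) :
    IsDS s T := fun a b hab hc => h a b hab (hc.trans hsub)

/- ===================== finiteness of lamS sets ===================== -/

/-- Number of adjacent changes. -/
def chg : List ℕ → ℕ
  | [] => 0
  | [_] => 0
  | x :: y :: t => (if x = y then 0 else 1) + chg (y :: t)

lemma chg_le_cons (x : ℕ) (M : List ℕ) : chg M ≤ chg (x :: M) := by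
  cases M with
  | nil => simp [chg]
  | cons m t => rw [show chg (x :: m :: t) = (if x = m then 0 else 1) + chg (m :: t) from rfl]; omega

lemma alt_of_chg (a b : ℕ) (hab : a ≠ b) :
    ∀ (t : List ℕ) (hd : ℕ), (∀ x ∈ hd :: t, x = a ∨ x = b) →
    (altList (chg (hd :: t) + 1) hd (if hd = a then b else a)).Sublist (hd :: t) := by
  intro t
  induction t with
  | nil =>
    intro hd _
    rw [show chg [hd] = 0 from rfl]
    simp [altList]
  | cons y t' ih =>
    intro hd hmem
    have hmem' : ∀ x ∈ y :: t', x = a ∨ x = b := fun x hx => hmem x (List.mem_cons_of_mem _ hx)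
    by_cases hxy : hd = y
    · have e : chg (hd :: y :: t') = chg (y :: t') := by
        rw [show chg (hd :: y :: t') = (if hd = y then 0 else 1) + chg (y :: t') from rfl,
          if_pos hxy, Nat.zero_add]
      rw [e]
      subst hxy
      exact (ih hd hmem').cons hd
    · have hhd : hd = a ∨ hd = b := hmem hd (by simp)
      have hy : y = a ∨ y = b := hmem' y (by simp)
      have h1 : (if hd = a then b else a) = y := by
        rcases hhd with rfl | rfl <;> rcases hy with rfl | rfl <;> simp_all
      have h2 : (if y = a then b else a) = hd := by
        rcases hhd with rfl | rfl <;> rcases hy with rfl | rfl <;> simp_all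
      rw [show chg (hd :: y :: t') = (if hd = y then 0 else 1) + chg (y :: t') from rfl,
        if_neg hxy]
      rw [show 1 + chg (y :: t') + 1 = (chg (y :: t') + 1) + 1 from by omega]
      rw [altList_cons, h1]
      refine List.Sublist.cons₂ hd ?_
      rw [← h2]
      exact ih y hmem'

lemma count_zip_le_chg (a b : ℕ) (hab : a ≠ b) :
    ∀ S : List ℕ,
      (S.zip S.tail).count (a, b) ≤ chg (S.filter (fun x => decide (x = a ∨ x = b)))
  | [] => by simp [chg]
  | [x] => by simp [chg]
  | (x :: y :: t) => by
    have ih := count_zip_le_chg a b hab (y :: t)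
    have hz : ((x :: y :: t).zip (x :: y :: t).tail) = (x, y) :: ((y :: t).zip (y :: t).tail) := rfl
    rw [hz, List.count_cons]
    by_cases hcase : x = a ∧ y = b
    · obtain ⟨rfl, rfl⟩ := hcase
      have hf : (x :: y :: t).filter (fun z => decide (z = x ∨ z = y))
          = x :: ((y :: t).filter (fun z => decide (z = x ∨ z = y))) := by
        simp [List.filter_cons]
      have hf2 : ((y :: t).filter (fun z => decide (z = x ∨ z = y)))
          = y :: (t.filter (fun z => decide (z = x ∨ z = y))) := by
        simp [List.filter_cons]
      rw [hf, hf2, show chg (x :: y :: t.filter (fun z => decide (z = x ∨ z = y)))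
          = (if x = y then 0 else 1) + chg (y :: t.filter (fun z => decide (z = x ∨ z = y))) from rfl,
        if_neg hab]
      rw [hf2] at ih
      simp only [beq_iff_eq, Prod.mk.injEq]
      split
      · omega
      · omega
    · have hle : chg ((y :: t).filter (fun z => decide (z = a ∨ z = b)))
          ≤ chg ((x :: y :: t).filter (fun z => decide (z = a ∨ z = b))) := by
        conv_rhs => rw [List.filter_cons]
        split
        · exact chg_le_cons _ _
        · exact le_rfl
      have hne : ¬ ((x, y) == (a, b)) = true := by
        simp only [beq_iff_eq, Prod.mk.injEq]
        tauto
      rw [if_neg hne]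
      omega

lemma sparse2_zip : ∀ (S : List ℕ), S.Chain' (· ≠ ·) → ∀ p ∈ S.zip S.tail, p.1 ≠ p.2
  | [] => by simp
  | [_] => by simp
  | (x :: y :: t) => by
    intro hSp p hp
    change List.IsChain _ (x :: y :: t) at hSp
    rw [List.isChain_cons_cons] at hSp
    rw [show ((x :: y :: t).zip (x :: y :: t).tail)
        = (x, y) :: ((y :: t).zip (y :: t).tail) from rfl] at hp
    rcases List.mem_cons.1 hp with rfl | hp'
    · exact hSp.1
    · exact sparse2_zip (y :: t) hSp.2 p hp'

lemma lamS_bddAbove (t n : ℕ) :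
    BddAbove {l : ℕ | ∃ S : List ℕ, IsDS t S ∧ Sparse2 S ∧ S.toFinset.card ≤ n ∧ S.length = l} := by
  refine ⟨t * (n * n) + 1, fun l hl => ?_⟩
  obtain ⟨S, hDS, hSp, hcard, rfl⟩ := hl
  set Z := S.zip S.tail with hZdef
  have hlenZ : S.length ≤ Z.length + 1 := by
    rcases S with _ | ⟨x, t'⟩
    · simp
    · simp [hZdef, List.length_zip]
  have hsubZ : Z.toFinset ⊆ S.toFinset ×ˢ S.toFinset := by
    rintro ⟨p, q⟩ hpq
    rw [List.mem_toFinset] at hpq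
    obtain ⟨h1, h2⟩ := List.of_mem_zip hpq
    exact Finset.mem_product.2 ⟨List.mem_toFinset.2 h1,
      List.mem_toFinset.2 (List.mem_of_mem_tail h2)⟩
  have hcardZ : Z.toFinset.card ≤ n * n := by
    calc Z.toFinset.card ≤ (S.toFinset ×ˢ S.toFinset).card := Finset.card_le_card hsubZ
    _ = S.toFinset.card * S.toFinset.card := Finset.card_product _ _
    _ ≤ n * n := Nat.mul_le_mul hcard hcard
  have hcount : ∀ y ∈ Z.toFinset, Z.count y ≤ t := by
    rintro ⟨c, d⟩ hy
    rw [List.mem_toFinset] at hy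
    have hcd : c ≠ d := sparse2_zip S hSp (c, d) hy
    have h1 : Z.count (c, d) ≤ chg (S.filter (fun x => decide (x = c ∨ x = d))) :=
      count_zip_le_chg c d hcd S
    set F := S.filter (fun x => decide (x = c ∨ x = d)) with hF
    have h2 : chg F ≤ t := by
      by_contra hcon
      push_neg at hcon
      cases hFc : F with
      | nil => rw [hFc] at hcon; simp [chg] at hcon
      | cons hd tl =>
        have hmem : ∀ x ∈ hd :: tl, x = c ∨ x = d := by
          intro x hx
          rw [← hFc, hF] at hx
          have := List.mem_filter.1 hx
          simpa using this.2
        have halt := alt_of_chg c d hcd tl hd hmem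
        rw [← hFc] at halt
        have hhd : hd ≠ (if hd = c then d else c) := by
          by_cases hdc : hd = c
          · subst hdc
            simpa using hcd
          · simp [hdc]
        obtain ⟨j, hj⟩ : ∃ j, chg F + 1 = (t + 2) + j := ⟨chg F + 1 - (t+2), by omega⟩
        rw [hj] at halt
        have hFS : F.Sublist S := by rw [hF]; exact List.filter_sublist (l := S)
        have hsub : (altList (t + 2) hd (if hd = c then d else c)).Sublist S :=
          ((altList_sublist_altList hd (if hd = c then d else c) (t+2) j).trans halt).trans hFS
        exact hDS hd _ hhd hsub
    omega
  have hsum : Z.length ≤ t * (n * n) := by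
    have hbridge : ∀ (z y : ℕ × ℕ),
        (@BEq.beq _ instBEqOfDecidableEq z y) = (@BEq.beq _ instBEqProd z y) := by
      intro z y
      have hl : @LawfulBEq (ℕ × ℕ) instBEqProd := by infer_instance
      rcases eq_or_ne z y with rfl | hzy
      · rw [@beq_self_eq_true _ instBEqProd _,
          show (@BEq.beq _ instBEqOfDecidableEq z z) = decide (z = z) from rfl]
        simp
      · rw [show (@BEq.beq _ instBEqOfDecidableEq z y) = decide (z = y) from rfl,
          (@beq_eq_false_iff_ne _ instBEqProd hl z y).2 hzy]
        simp [hzy]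
    have hcnt : ∀ (y : ℕ × ℕ) (L : List (ℕ × ℕ)),
        @List.count _ instBEqOfDecidableEq y L = @List.count _ instBEqProd y L := by
      intro y L
      induction L with
      | nil => rfl
      | cons z tl ih =>
        rw [@List.count_cons _ instBEqOfDecidableEq, @List.count_cons _ instBEqProd, ih,
          hbridge z y]
    have : Z.length = ∑ y ∈ Z.toFinset, Z.count y := by
      rw [← List.sum_toFinset_count_eq_length Z]
      exact Finset.sum_congr rfl (fun y _ => hcnt y Z)
    rw [this]
    calc ∑ y ∈ Z.toFinset, Z.count y ≤ ∑ _y ∈ Z.toFinset, t := Finset.sum_le_sum hcount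
    _ = Z.toFinset.card * t := by simp [mul_comm]
    _ ≤ (n * n) * t := Nat.mul_le_mul_right t hcardZ
    _ = t * (n * n) := mul_comm _ _
  omega

/- ===================== splitting off the first interval ===================== -/

/-- The shortest nonempty prefix ending at a "last occurrence". -/
def splitA : List ℕ → List ℕ
  | [] => []
  | x :: t => if x ∈ t then x :: splitA t else [x]

def splitB : List ℕ → List ℕ
  | [] => []
  | x :: t => if x ∈ t then splitB t else t

lemma split_append : ∀ l : List ℕ, splitA l ++ splitB l = l
  | [] => rfl
  | x :: t => by
    by_cases h : x ∈ t <;> simp [splitA, splitB, h, split_append t]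

lemma splitA_ne_nil : ∀ l : List ℕ, l ≠ [] → splitA l ≠ [] := by
  intro l hl
  cases l with
  | nil => exact absurd rfl hl
  | cons x t => by_cases h : x ∈ t <;> simp [splitA, h]

lemma split_spec : ∀ l : List ℕ, l ≠ [] →
    ∃ A' z, splitA l = A' ++ [z] ∧ z ∉ splitB l ∧
      ∀ y ∈ splitA l, y ∉ splitB l → y = z := by
  intro l
  induction l with
  | nil => intro hl; exact absurd rfl hl
  | cons x t ih =>
    intro _
    by_cases hx : x ∈ t
    · have ht : t ≠ [] := by rintro rfl; simp at hx
      obtain ⟨A', z, h1, h2, h3⟩ := ih ht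
      refine ⟨x :: A', z, by simp [splitA, hx, h1], by simpa [splitB, hx] using h2, ?_⟩
      intro y hy hyB
      rw [show splitA (x :: t) = x :: splitA t from by simp [splitA, hx]] at hy
      rw [show splitB (x :: t) = splitB t from by simp [splitB, hx]] at hyB
      rcases List.mem_cons.1 hy with rfl | hy'
      · have hyA : y ∈ splitA t := by
          have : y ∈ splitA t ++ splitB t := by rw [split_append]; exact hx
          rcases List.mem_append.1 this with h | h
          · exact h
          · exact absurd h hyB
        exact h3 y hyA hyB
      · exact h3 y hy' hyB
    · refine ⟨[], x, by simp [splitA, hx], by simp [splitB, hx, hx], ?_⟩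
      intro y hy _
      rw [show splitA (x :: t) = [x] from by simp [splitA, hx]] at hy
      simpa using hy

lemma splitB_length_lt (l : List ℕ) (hl : l ≠ []) : (splitB l).length < l.length := by
  have h1 := split_append l
  have h2 := splitA_ne_nil l hl
  have : (splitA l).length + (splitB l).length = l.length := by
    rw [← List.length_append, h1]
  have : 1 ≤ (splitA l).length := List.length_pos_iff.2 h2
  omega

lemma splitB_toFinset_card (l : List ℕ) (hl : l ≠ []) :
    (splitB l).toFinset.card + 1 ≤ l.toFinset.card := by
  obtain ⟨A', z, hA, hzB, _⟩ := split_spec l hl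
  have hzl : z ∈ l := by
    rw [← split_append l]
    exact List.mem_append.2 (Or.inl (by rw [hA]; simp))
  have hsub : (splitB l).toFinset ⊆ l.toFinset.erase z := by
    intro y hy
    rw [List.mem_toFinset] at hy
    refine Finset.mem_erase.2 ⟨?_, List.mem_toFinset.2 ?_⟩
    · rintro rfl; exact hzB hy
    · rw [← split_append l]; exact List.mem_append.2 (Or.inr hy)
  calc (splitB l).toFinset.card + 1 ≤ (l.toFinset.erase z).card + 1 :=
        Nat.add_le_add_right (Finset.card_le_card hsub) 1
  _ = l.toFinset.card := Finset.card_erase_add_one (List.mem_toFinset.2 hzl)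

lemma isDS_splitA (u : ℕ) (S : List ℕ) (hS : S ≠ []) (hDS : IsDS (u+1) S) :
    IsDS u (splitA S) := by
  intro a b hab halt
  obtain ⟨A', z, hA, hzB, hspec⟩ := split_spec S hS
  have hsplit := split_append S
  have hAS : (splitA S).Sublist S := by
    conv_rhs => rw [← hsplit]
    exact List.sublist_append_left _ _
  set w : ℕ := if (u+2) % 2 = 0 then a else b with hw
  have happ : altList (u+2+1) a b = altList (u+2) a b ++ [w] := altList_succ_append (u+2) a b
  have hwmem : w ∈ altList (u+2) a b := by
    rcases (mem_altList u a b) with ⟨ha, hb⟩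
    rw [hw]; split <;> assumption
  by_cases hwB : w ∈ splitB S
  · refine hDS a b hab ?_
    rw [show u+1+2 = u+2+1 from rfl, happ, ← hsplit]
    exact halt.append (List.singleton_sublist.2 hwB)
  · have hwA : w ∈ splitA S := halt.subset hwmem
    have hwz : w = z := hspec w hwA hwB
    rw [hA] at halt
    obtain ⟨X, Y, hXY, hX, hY⟩ := List.sublist_append_iff.1 halt
    have hYcases : Y = [] ∨ Y = [z] := by
      cases Y with
      | nil => exact Or.inl rfl
      | cons y0 ys =>
        right
        have hlen : (y0 :: ys).length ≤ 1 := by simpa using hY.length_le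
        have : ys = [] := by
          cases ys with
          | nil => rfl
          | cons _ _ => simp at hlen
        subst this
        have : y0 ∈ [z] := hY.subset (by simp)
        simp at this
        rw [this]
    rcases hYcases with rfl | rfl
    · rw [List.append_nil] at hXY
      refine hDS a b hab ?_
      have h1 : (altList (u+2+1) a b).Sublist (A' ++ [z]) := by
        rw [happ, hwz, hXY]
        exact hX.append (List.Sublist.refl [z])
      rw [show u+1+2 = u+2+1 from rfl]
      exact (h1.trans (hA ▸ hAS))
    · -- the alternation ends with z, but its last element differs from w = z
      have hlast1 : (altList (u+2) a b).getLast? = some z := by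
        rw [hXY]; exact List.getLast?_concat
      have hlast2 : (altList (u+2) a b).getLast? = some (if (u+1) % 2 = 0 then a else b) := by
        rw [show u + 2 = (u+1)+1 from rfl, altList_succ_append (u+1) a b]
        exact List.getLast?_concat
      have hz' : z = (if (u+1) % 2 = 0 then a else b) := by
        rw [hlast1] at hlast2
        exact Option.some.inj hlast2
      have : w ≠ z := by
        rw [hz', hw]
        rcases Nat.mod_two_eq_zero_or_one u with h | h <;>
          simp [h, Nat.add_mod] <;> [exact hab; exact Ne.symm hab]
      exact this hwz

/- ===================== the decomposition ===================== -/

lemma decomp (u : ℕ) : ∀ (N : ℕ) (S : List ℕ), S.length ≤ N → IsDS (u+1) S → Sparse2 S →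
    ∃ Is : List (List ℕ), S = Is.flatten ∧ Is.length ≤ S.toFinset.card ∧
      ∀ I ∈ Is, I ≠ [] ∧ Sparse2 I ∧ IsDS u I := by
  intro N
  induction N with
  | zero =>
    intro S hlen _ _
    have : S = [] := List.eq_nil_of_length_eq_zero (Nat.le_zero.1 hlen)
    exact ⟨[], by simp [this], by simp, by simp⟩
  | succ N ih =>
    intro S hlen hDS hSp
    rcases eq_or_ne S [] with rfl | hS
    · exact ⟨[], by simp, by simp, by simp⟩
    · have hsplit := split_append S
      have hBlen : (splitB S).length ≤ N := by
        have := splitB_length_lt S hS; omega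
      have hBsub : (splitB S).Sublist S := by
        conv_rhs => rw [← hsplit]
        exact List.sublist_append_right _ _
      have hBDS : IsDS (u+1) (splitB S) := hDS.sublist hBsub
      have hSp' : S.Chain' (· ≠ ·) := hSp
      have hBSp : Sparse2 (splitB S) := hSp'.suffix ⟨splitA S, hsplit⟩
      obtain ⟨Is, hBflat, hIslen, hIprops⟩ := ih (splitB S) hBlen hBDS hBSp
      refine ⟨splitA S :: Is, ?_, ?_, ?_⟩
      · rw [List.flatten_cons, ← hBflat, hsplit]
      · have h1 := splitB_toFinset_card S hS
        simp only [List.length_cons]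
        omega
      · intro I hI
        rcases List.mem_cons.1 hI with rfl | hI'
        · exact ⟨splitA_ne_nil S hS, hSp'.prefix ⟨splitB S, hsplit⟩, isDS_splitA u S hS hDS⟩
        · exact hIprops I hI'

/- ===================== lamB boundedness and dedup helpers ===================== -/

lemma lamB_bddAbove (s n m : ℕ) :
    BddAbove {l : ℕ | ∃ S : List ℕ, IsDS s S ∧ S.toFinset.card ≤ n ∧ Blocked m S ∧ S.length = l} := by
  refine ⟨m * n, fun l hl => ?_⟩
  obtain ⟨S, _, hcard, ⟨Bs, hBsLen, hNodup, rfl⟩, rfl⟩ := hl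
  rw [List.length_flatten]
  have hb : ∀ x ∈ Bs.map List.length, x ≤ n := by
    intro x hx
    obtain ⟨B, hB, rfl⟩ := List.mem_map.1 hx
    have h1 : B.toFinset.card = B.length := List.toFinset_card_of_nodup (hNodup B hB)
    have h2 : B.toFinset ⊆ Bs.flatten.toFinset := by
      intro y hy
      rw [List.mem_toFinset] at hy ⊢
      exact (List.sublist_flatten_of_mem hB).subset hy
    calc B.length = B.toFinset.card := h1.symm
    _ ≤ Bs.flatten.toFinset.card := Finset.card_le_card h2
    _ ≤ n := hcard
  calc (Bs.map List.length).sum ≤ (Bs.map List.length).length • n :=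
        List.sum_le_card_nsmul _ n hb
  _ = Bs.length * n := by simp [smul_eq_mul]
  _ ≤ m * n := Nat.mul_le_mul_right n hBsLen

lemma flatten_map_dedup_sublist : ∀ Is : List (List ℕ),
    ((Is.map List.dedup).flatten).Sublist Is.flatten
  | [] => by simp
  | (a :: t) => by
    simp only [List.map_cons, List.flatten_cons]
    exact (List.dedup_sublist a).append (flatten_map_dedup_sublist t)

lemma length_le_mul_sum (c : ℕ) : ∀ (Is : List (List ℕ)),
    (∀ I ∈ Is, I.length ≤ c * I.dedup.length) →
    Is.flatten.length ≤ c * (Is.map List.dedup).flatten.length := by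
  intro Is
  induction Is with
  | nil => simp
  | cons a t ih =>
    intro hp
    simp only [List.map_cons, List.flatten_cons, List.length_append]
    rw [Nat.mul_add]
    exact Nat.add_le_add (hp a (by simp)) (ih (fun I hI => hp I (by simp [hI])))
/-- For `s ≥ 2` and nondecreasing `γ` with `λ_{s−1}(n) ≤ γ(n)·n` for all `n ≥ 1`,
we have `λ_s(n) ≤ γ(n)·λ_s(n, n)` for all `n ≥ 1`. -/
theorem stmt6 (s : ℕ) (hs : 2 ≤ s) (γ : ℕ → ℕ) (hγ : Monotone γ)
    (h : ∀ n : ℕ, 1 ≤ n → lamS (s - 1) n ≤ γ n * n) :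
    ∀ n : ℕ, 1 ≤ n → lamS s n ≤ γ n * lamB s n n := by
  intro n hn
  obtain ⟨u, rfl⟩ : ∃ u, s = u + 1 := ⟨s - 1, by omega⟩
  have hs1 : u + 1 - 1 = u := by omega
  rw [hs1] at h
  have hemp : IsDS (u+1) ([] : List ℕ) := by
    intro a b _ hc
    have := List.sublist_nil.1 hc
    rw [show altList (u+1+2) a b = a :: altList (u+1+1) b a from rfl] at this
    exact List.cons_ne_nil _ _ this
  refine csSup_le ⟨0, ⟨[], hemp, List.isChain_nil, by simp, rfl⟩⟩ ?_
  rintro l ⟨S, hDS, hSp, hcard, rfl⟩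
  obtain ⟨Is, hflat, hIsLen, hprops⟩ := decomp u S.length S le_rfl hDS hSp
  set T := Is.map List.dedup with hTdef
  have hTsub : (T.flatten).Sublist S := hflat ▸ flatten_map_dedup_sublist Is
  have hTDS : IsDS (u+1) T.flatten := hDS.sublist hTsub
  have hTcard : T.flatten.toFinset.card ≤ n := by
    refine le_trans (Finset.card_le_card ?_) hcard
    intro x hx
    rw [List.mem_toFinset] at hx ⊢
    exact hTsub.subset hx
  have hblk : Blocked n T.flatten := by
    refine ⟨T, ?_, ?_, rfl⟩
    · rw [hTdef, List.length_map]
      calc Is.length ≤ S.toFinset.card := hIsLen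
      _ ≤ n := hcard
    · intro B hB
      obtain ⟨I, _, rfl⟩ := List.mem_map.1 hB
      exact List.nodup_dedup I
  have hTle : T.flatten.length ≤ lamB (u+1) n n :=
    le_csSup (lamB_bddAbove (u+1) n n) ⟨T.flatten, hTDS, hTcard, hblk, rfl⟩
  have hper : ∀ I ∈ Is, I.length ≤ γ n * I.dedup.length := by
    intro I hI
    obtain ⟨hne, hISp, hIDS⟩ := hprops I hI
    have hIsub : I.Sublist S := hflat ▸ List.sublist_flatten_of_mem hI
    have hIcard_le : I.toFinset.card ≤ n := by
      refine le_trans (Finset.card_le_card ?_) hcard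
      intro x hx
      rw [List.mem_toFinset] at hx ⊢
      exact hIsub.subset hx
    have hIcard_pos : 1 ≤ I.toFinset.card := by
      obtain ⟨x, hx⟩ := List.exists_mem_of_ne_nil I hne
      exact Finset.card_pos.2 ⟨x, List.mem_toFinset.2 hx⟩
    calc I.length ≤ lamS u I.toFinset.card :=
          le_csSup (lamS_bddAbove u _) ⟨I, hIDS, hISp, le_rfl, rfl⟩
    _ ≤ γ I.toFinset.card * I.toFinset.card := h _ hIcard_pos
    _ ≤ γ n * I.toFinset.card := Nat.mul_le_mul_right _ (hγ hIcard_le)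
    _ = γ n * I.dedup.length := by rw [List.card_toFinset]
  calc S.length = Is.flatten.length := by rw [hflat]
  _ ≤ γ n * T.flatten.length := length_le_mul_sum (γ n) Is hper
  _ ≤ γ n * lamB (u+1) n n := Nat.mul_le_mul_left _ hTle
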